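/- Privacy amplification by subsampling: let K be the mechanism that samples m out of n records uniformly without replacement. If M : X^m → Y satisfies (ε, δ)-differential privacy with respect to the replacement relation on datasets of size m, then the mechanism M ∘ K : X^n → Y satisfies (log(1 + (m/n)(e^ε − 1)), (m/n)δ)-differential privacy with respect to the replacement relation on datasets of size n. -/

import Mathlib

private noncomputable def ampSlot {m n : ℕ} (hm : 0 < m) (i : Fin n) (s : Fin m ↪ Fin n) :
    Fin m :=
  if h : ∃ k, s k = i then h.choose else ⟨0, hm⟩

private lemma ampSlot_spec {m n : ℕ} (hm : 0 < m) (i : Fin n) (s : Fin m ↪ Fin n)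
    (h : ∃ k, s k = i) : s (ampSlot hm i s) = i := by
  rw [ampSlot, dif_pos h]; exact h.choose_spec

private lemma ampSlot_eq {m n : ℕ} (hm : 0 < m) (i : Fin n) (s : Fin m ↪ Fin n) {k : Fin m}
    (hk : s k = i) : ampSlot hm i s = k :=
  s.injective (by rw [ampSlot_spec hm i s ⟨k, hk⟩, hk])

/-- Privacy amplification by subsampling m-out-of-n without replacement. -/
theorem amplification_by_subsampling
    {X Y : Type*} {m n : ℕ} [Nonempty (Fin m ↪ Fin n)] (hm : 0 < m) (hmn : m ≤ n)
    (M : (Fin m → X) → PMF Y) (ε δ : ℝ) (hε : 0 ≤ ε) (hδ : 0 ≤ δ)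
    (hM : ∀ D D' : Fin m → X, (∃ i, ∀ j, j ≠ i → D j = D' j) → ∀ S : Set Y,
      (M D).toOuterMeasure S ≤
        ENNReal.ofReal (Real.exp ε) * (M D').toOuterMeasure S + ENNReal.ofReal δ) :
    ∀ D D' : Fin n → X, (∃ i, ∀ j, j ≠ i → D j = D' j) → ∀ S : Set Y,
      ((PMF.uniformOfFintype (Fin m ↪ Fin n)).bind (fun s => M (D ∘ s))).toOuterMeasure S ≤
        ENNReal.ofReal (Real.exp (Real.log (1 + ((m : ℝ) / n) * (Real.exp ε - 1)))) *
          ((PMF.uniformOfFintype (Fin m ↪ Fin n)).bind (fun s => M (D' ∘ s))).toOuterMeasure S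
        + ENNReal.ofReal (((m : ℝ) / n) * δ) := by
  classical
  intro D D' hDD' S
  obtain ⟨i, hi⟩ := hDD'
  have hE0 : (0:ℝ) < Real.exp ε := Real.exp_pos ε
  have hE1 : (1:ℝ) ≤ Real.exp ε := Real.one_le_exp hε
  have hn : 0 < n := lt_of_lt_of_le hm hmn
  set N := Fintype.card (Fin m ↪ Fin n) with hN
  have hNpos : 0 < N := Fintype.card_pos
  have hxpos : (0:ℝ) < 1 + (m:ℝ)/n * (Real.exp ε - 1) := by
    have h1 : (0:ℝ) ≤ (m:ℝ)/n * (Real.exp ε - 1) :=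
      mul_nonneg (div_nonneg (Nat.cast_nonneg _) (Nat.cast_nonneg _)) (by linarith)
    linarith
  set f : (Fin m ↪ Fin n) → ℝ := fun s => ((M (D ∘ ⇑s)).toOuterMeasure S).toReal with hf
  set g : (Fin m ↪ Fin n) → ℝ := fun s => ((M (D' ∘ ⇑s)).toOuterMeasure S).toReal with hg
  have hle1 : ∀ p : PMF Y, p.toOuterMeasure S ≤ 1 := by
    intro p
    rw [PMF.toOuterMeasure_apply]
    calc ∑' x, S.indicator p x ≤ ∑' x, p x :=
          ENNReal.tsum_le_tsum fun x => Set.indicator_apply_le fun _ => le_rfl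
      _ = 1 := p.tsum_coe
  have hfin : ∀ p : PMF Y, p.toOuterMeasure S ≠ ⊤ :=
    fun p => ne_top_of_le_ne_top ENNReal.one_ne_top (hle1 p)
  have hstep : ∀ s t : Fin m ↪ Fin n,
      (∃ k, ∀ l, l ≠ k → (D ∘ ⇑s) l = (D' ∘ ⇑t) l) → f s ≤ Real.exp ε * g t + δ := by
    intro s t hnb
    have h := hM (D ∘ ⇑s) (D' ∘ ⇑t) hnb S
    have hmulfin : ENNReal.ofReal (Real.exp ε) * (M (D' ∘ ⇑t)).toOuterMeasure S ≠ ⊤ :=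
      ENNReal.mul_ne_top ENNReal.ofReal_ne_top (hfin _)
    have hRfin : ENNReal.ofReal (Real.exp ε) * (M (D' ∘ ⇑t)).toOuterMeasure S
        + ENNReal.ofReal δ ≠ ⊤ := ENNReal.add_ne_top.2 ⟨hmulfin, ENNReal.ofReal_ne_top⟩
    have h2 := ENNReal.toReal_mono hRfin h
    rwa [ENNReal.toReal_add hmulfin ENNReal.ofReal_ne_top, ENNReal.toReal_mul,
      ENNReal.toReal_ofReal hE0.le, ENNReal.toReal_ofReal hδ] at h2
  -- combinatorial setup
  set A : Finset (Fin m ↪ Fin n) := Finset.univ.filter (fun s => ∃ k, s k = i) with hA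
  set B : Finset (Fin m ↪ Fin n) := Finset.univ.filter (fun s => ¬∃ k, s k = i) with hB
  set Cs : (Fin m ↪ Fin n) → Finset (Fin n) :=
    fun s => Finset.univ.filter (fun j => ∀ k, s k ≠ j) with hCsdef
  set S1 : Finset (Σ _ : Fin m ↪ Fin n, Fin n) := A.sigma Cs with hS1def
  set S2 : Finset (Σ _ : Fin m ↪ Fin n, Fin m) := B.sigma (fun _ => Finset.univ) with hS2def
  set φ : (Σ _ : Fin m ↪ Fin n, Fin n) → (Σ _ : Fin m ↪ Fin n, Fin m) :=
    fun x => ⟨x.1.trans (Equiv.swap i x.2).toEmbedding, ampSlot hm i x.1⟩ with hφ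
  set ψ : (Σ _ : Fin m ↪ Fin n, Fin m) → (Σ _ : Fin m ↪ Fin n, Fin n) :=
    fun y => ⟨y.1.trans (Equiv.swap i (y.1 y.2)).toEmbedding, y.1 y.2⟩ with hψ
  have hmemS1 : ∀ x : (Σ _ : Fin m ↪ Fin n, Fin n),
      x ∈ S1 ↔ (∃ k, x.1 k = i) ∧ ∀ k, x.1 k ≠ x.2 := by
    intro x; simp [hS1def, hA, hCsdef, Finset.mem_sigma, Finset.mem_filter]
  have hmemS2 : ∀ y : (Σ _ : Fin m ↪ Fin n, Fin m), y ∈ S2 ↔ ∀ k, y.1 k ≠ i := by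
    intro y; simp [hS2def, hB, Finset.mem_sigma, Finset.mem_filter]
  have hφmem : ∀ x ∈ S1, φ x ∈ S2 := by
    intro x hx
    obtain ⟨hAx, hjx⟩ := (hmemS1 x).1 hx
    rw [hmemS2]
    intro l hl
    simp only [hφ, Function.Embedding.trans_apply, Equiv.coe_toEmbedding] at hl
    exact hjx l ((Equiv.swap i x.2).injective
      (hl.trans (Equiv.swap_apply_right i x.2).symm))
  have hψmem : ∀ y ∈ S2, ψ y ∈ S1 := by
    intro y hy
    have ht := (hmemS2 y).1 hy
    rw [hmemS1]
    constructor
    · exact ⟨y.2, by simp [hψ, Function.Embedding.trans_apply, Equiv.swap_apply_right]⟩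
    · intro l hl
      simp only [hψ, Function.Embedding.trans_apply, Equiv.coe_toEmbedding] at hl
      exact ht l ((Equiv.swap i (y.1 y.2)).injective
        (hl.trans (Equiv.swap_apply_left i (y.1 y.2)).symm))
  have hleft : ∀ x ∈ S1, ψ (φ x) = x := by
    intro x hx
    obtain ⟨hAx, hjx⟩ := (hmemS1 x).1 hx
    have h2 : (x.1.trans (Equiv.swap i x.2).toEmbedding) (ampSlot hm i x.1) = x.2 := by
      simp only [Function.Embedding.trans_apply, Equiv.coe_toEmbedding]
      rw [ampSlot_spec hm i x.1 hAx, Equiv.swap_apply_left]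
    have h3 : (x.1.trans (Equiv.swap i x.2).toEmbedding).trans
        (Equiv.swap i x.2).toEmbedding = x.1 := by
      ext l
      simp [Function.Embedding.trans_apply, Equiv.swap_apply_self]
    simp only [hψ, hφ, h2, h3]
  have hright : ∀ y ∈ S2, φ (ψ y) = y := by
    intro y hy
    have ht := (hmemS2 y).1 hy
    have hk : (y.1.trans (Equiv.swap i (y.1 y.2)).toEmbedding) y.2 = i := by
      simp [Function.Embedding.trans_apply, Equiv.swap_apply_right]
    have hslot : ampSlot hm i (y.1.trans (Equiv.swap i (y.1 y.2)).toEmbedding) = y.2 :=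
      ampSlot_eq hm i _ hk
    have h3 : (y.1.trans (Equiv.swap i (y.1 y.2)).toEmbedding).trans
        (Equiv.swap i (y.1 y.2)).toEmbedding = y.1 := by
      ext l
      simp [Function.Embedding.trans_apply, Equiv.swap_apply_self]
    simp only [hφ, hψ, hslot, h3]
  have hbijsum : ∑ x ∈ S1, g (x.1.trans (Equiv.swap i x.2).toEmbedding)
      = ∑ y ∈ S2, g y.1 :=
    Finset.sum_nbij' φ ψ hφmem hψmem hleft hright (fun x _ => rfl)
  have hcardbij : S1.card = S2.card :=
    Finset.card_nbij' φ ψ hφmem hψmem hleft hright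
  have hCs : ∀ s : Fin m ↪ Fin n, (Cs s).card = n - m := by
    intro s
    have hcompl : Cs s = (Finset.univ.image s)ᶜ := by
      ext j
      simp [hCsdef, eq_comm]
    rw [hcompl, Finset.card_compl, Finset.card_image_of_injective _ s.injective]
    simp
  have hS1card : S1.card = A.card * (n - m) := by
    rw [hS1def, Finset.card_sigma]
    rw [Finset.sum_congr rfl (fun s _ => hCs s), Finset.sum_const, smul_eq_mul]
  have hS2card : S2.card = B.card * m := by
    rw [hS2def, Finset.card_sigma]
    simp [Finset.card_univ]
  have habN : A.card + B.card = N := by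
    rw [hA, hB, hN]
    rw [Finset.card_filter_add_card_filter_not]
    exact Finset.card_univ
  have h4nat : A.card * n = m * N := by
    have h12 : A.card * (n - m) = B.card * m := by
      rw [← hS1card, ← hS2card, hcardbij]
    calc A.card * n = A.card * ((n - m) + m) := by rw [Nat.sub_add_cancel hmn]
      _ = A.card * (n - m) + A.card * m := by ring
      _ = B.card * m + A.card * m := by rw [h12]
      _ = (A.card + B.card) * m := by ring
      _ = m * N := by rw [habN]; ring
  have h4R : (A.card : ℝ) * n = m * N := by exact_mod_cast h4nat
  -- pointwise facts
  have hAfact : ∀ s ∈ A, f s ≤ Real.exp ε * g s + δ := by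
    intro s _
    apply hstep
    exact ⟨ampSlot hm i s, fun l hl =>
      hi (s l) (fun hc => hl (ampSlot_eq hm i s hc).symm)⟩
  have hBfact : ∀ s ∈ B, f s = g s := by
    intro s hs
    have hBs : ¬∃ k, s k = i := by
      have := (Finset.mem_filter.1 (hB ▸ hs)).2
      exact this
    have hDs : D ∘ ⇑s = D' ∘ ⇑s := funext fun l => hi (s l) (fun hc => hBs ⟨l, hc⟩)
    simp only [hf, hg, hDs]
  have hS1fact : ∀ x ∈ S1,
      f x.1 ≤ Real.exp ε * g (x.1.trans (Equiv.swap i x.2).toEmbedding) + δ := by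
    intro x hx
    obtain ⟨hAx, hjx⟩ := (hmemS1 x).1 hx
    apply hstep
    refine ⟨ampSlot hm i x.1, fun l hl => ?_⟩
    have h1 : x.1 l ≠ i := fun hc => hl (ampSlot_eq hm i x.1 hc).symm
    have h2 : x.1 l ≠ x.2 := hjx l
    show D (x.1 l) = D' ((x.1.trans (Equiv.swap i x.2).toEmbedding) l)
    simp only [Function.Embedding.trans_apply, Equiv.coe_toEmbedding]
    rw [Equiv.swap_apply_of_ne_of_ne h1 h2]
    exact hi (x.1 l) h1
  -- sums
  have hSAg0 : (0:ℝ) ≤ ∑ s ∈ A, g s :=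
    Finset.sum_nonneg fun s _ => ENNReal.toReal_nonneg
  have hSBg0 : (0:ℝ) ≤ ∑ s ∈ B, g s :=
    Finset.sum_nonneg fun s _ => ENNReal.toReal_nonneg
  have h1sum : ∑ s ∈ A, f s ≤ Real.exp ε * ∑ s ∈ A, g s + A.card * δ := by
    calc ∑ s ∈ A, f s ≤ ∑ s ∈ A, (Real.exp ε * g s + δ) := Finset.sum_le_sum hAfact
      _ = Real.exp ε * ∑ s ∈ A, g s + A.card * δ := by
          rw [Finset.sum_add_distrib, ← Finset.mul_sum, Finset.sum_const, nsmul_eq_mul]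
  have e1 : ∑ x ∈ S1, f x.1 = ((n:ℝ) - m) * ∑ s ∈ A, f s := by
    rw [hS1def, Finset.sum_sigma]
    have heach : ∀ s ∈ A, ∑ _j ∈ Cs s, f s = ((n:ℝ) - m) * f s := by
      intro s _
      rw [Finset.sum_const, hCs s, nsmul_eq_mul, Nat.cast_sub hmn]
    rw [Finset.sum_congr rfl heach, ← Finset.mul_sum]
  have e2 : ∑ y ∈ S2, g y.1 = (m:ℝ) * ∑ t ∈ B, g t := by
    rw [hS2def, Finset.sum_sigma]
    have heach : ∀ t ∈ B, ∑ _k : Fin m, g t = (m:ℝ) * g t := by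
      intro t _
      rw [Finset.sum_const, Finset.card_univ, Fintype.card_fin, nsmul_eq_mul]
    rw [Finset.sum_congr rfl heach, ← Finset.mul_sum]
  have e1' : ∑ x ∈ S1, (Real.exp ε * g (x.1.trans (Equiv.swap i x.2).toEmbedding) + δ)
      = Real.exp ε * ((m:ℝ) * ∑ t ∈ B, g t) + ((n:ℝ) - m) * ((A.card:ℝ) * δ) := by
    rw [Finset.sum_add_distrib, ← Finset.mul_sum, hbijsum, e2, Finset.sum_const,
      nsmul_eq_mul, hS1card]
    push_cast [Nat.cast_sub hmn]
    ring
  have h2sum : ((n:ℝ) - m) * ∑ s ∈ A, f s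
      ≤ Real.exp ε * ((m:ℝ) * ∑ t ∈ B, g t) + ((n:ℝ) - m) * ((A.card:ℝ) * δ) := by
    rw [← e1, ← e1']
    exact Finset.sum_le_sum hS1fact
  have h3sum : ∑ s ∈ B, f s = ∑ s ∈ B, g s := Finset.sum_congr rfl hBfact
  have hsplitf : ∑ s : Fin m ↪ Fin n, f s = ∑ s ∈ A, f s + ∑ s ∈ B, f s := by
    rw [hA, hB]
    exact (Finset.sum_filter_add_sum_filter_not Finset.univ _ f).symm
  have hsplitg : ∑ s : Fin m ↪ Fin n, g s = ∑ s ∈ A, g s + ∑ s ∈ B, g s := by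
    rw [hA, hB]
    exact (Finset.sum_filter_add_sum_filter_not Finset.univ _ g).symm
  -- master real inequality
  have R : ∑ s : Fin m ↪ Fin n, f s
      ≤ (1 + (m:ℝ)/n * (Real.exp ε - 1)) * ∑ s : Fin m ↪ Fin n, g s
        + (N:ℝ) * ((m:ℝ)/n * δ) := by
    rw [hsplitf, hsplitg, h3sum]
    have hnE : (0:ℝ) < (n:ℝ) * Real.exp ε := by positivity
    apply le_of_mul_le_mul_left _ hnE
    have hrhs : (n:ℝ) * Real.exp ε *
        ((1 + (m:ℝ)/n * (Real.exp ε - 1)) * (∑ s ∈ A, g s + ∑ s ∈ B, g s)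
          + (N:ℝ) * ((m:ℝ)/n * δ))
        = Real.exp ε * ((n:ℝ) + (m:ℝ) * (Real.exp ε - 1)) * (∑ s ∈ A, g s + ∑ s ∈ B, g s)
          + Real.exp ε * (m:ℝ) * (N:ℝ) * δ := by
      field_simp
    rw [hrhs]
    have hc1 : (0:ℝ) ≤ (n:ℝ) + (m:ℝ) * (Real.exp ε - 1) :=
      add_nonneg (Nat.cast_nonneg _) (mul_nonneg (Nat.cast_nonneg _) (by linarith))
    have h1' := mul_le_mul_of_nonneg_left h1sum hc1
    have h2' := mul_le_mul_of_nonneg_left h2sum (show (0:ℝ) ≤ Real.exp ε - 1 by linarith)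
    have h4' : (A.card:ℝ) * n * (Real.exp ε * δ) = (m:ℝ) * N * (Real.exp ε * δ) := by
      rw [h4R]
    linarith [h1', h2', h4']
  -- convert the ENNReal goal
  have hbindeq : ∀ DD : Fin n → X,
      ((PMF.uniformOfFintype (Fin m ↪ Fin n)).bind (fun s => M (DD ∘ ⇑s))).toOuterMeasure S
        = (N : ENNReal)⁻¹ * ∑ s : Fin m ↪ Fin n, (M (DD ∘ ⇑s)).toOuterMeasure S := by
    intro DD
    rw [PMF.toOuterMeasure_bind_apply, tsum_fintype]
    simp only [PMF.uniformOfFintype_apply]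
    rw [← Finset.mul_sum, hN]
  rw [hbindeq D, hbindeq D']
  have hNne0 : (N : ENNReal) ≠ 0 := Nat.cast_ne_zero.2 hNpos.ne'
  have hNnetop : (N : ENNReal) ≠ ⊤ := ENNReal.natCast_ne_top N
  have hRHSrw : ENNReal.ofReal (Real.exp (Real.log (1 + ((m : ℝ) / n) * (Real.exp ε - 1)))) *
        ((N : ENNReal)⁻¹ * ∑ s : Fin m ↪ Fin n, (M (D' ∘ ⇑s)).toOuterMeasure S)
        + ENNReal.ofReal (((m : ℝ) / n) * δ)
      = (N : ENNReal)⁻¹ *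
        (ENNReal.ofReal (Real.exp (Real.log (1 + ((m : ℝ) / n) * (Real.exp ε - 1)))) *
          (∑ s : Fin m ↪ Fin n, (M (D' ∘ ⇑s)).toOuterMeasure S)
          + (N : ENNReal) * ENNReal.ofReal (((m : ℝ) / n) * δ)) := by
    rw [mul_add, ← mul_assoc ((N : ENNReal)⁻¹) ((N : ENNReal)) _,
      ENNReal.inv_mul_cancel hNne0 hNnetop, one_mul, mul_left_comm]
  rw [hRHSrw]
  refine mul_le_mul_right ?_ _
  have hFfin : (∑ s : Fin m ↪ Fin n, (M (D ∘ ⇑s)).toOuterMeasure S) ≠ ⊤ := by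
    refine (ENNReal.sum_lt_top.2 fun s _ => ?_).ne
    exact (hfin _).lt_top
  have hGfin : (∑ s : Fin m ↪ Fin n, (M (D' ∘ ⇑s)).toOuterMeasure S) ≠ ⊤ := by
    refine (ENNReal.sum_lt_top.2 fun s _ => ?_).ne
    exact (hfin _).lt_top
  have hmulfin : ENNReal.ofReal (Real.exp (Real.log (1 + ((m : ℝ) / n) * (Real.exp ε - 1)))) *
      (∑ s : Fin m ↪ Fin n, (M (D' ∘ ⇑s)).toOuterMeasure S) ≠ ⊤ :=
    ENNReal.mul_ne_top ENNReal.ofReal_ne_top hGfin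
  have hcfin : (N : ENNReal) * ENNReal.ofReal (((m : ℝ) / n) * δ) ≠ ⊤ :=
    ENNReal.mul_ne_top hNnetop ENNReal.ofReal_ne_top
  have hRfin : ENNReal.ofReal (Real.exp (Real.log (1 + ((m : ℝ) / n) * (Real.exp ε - 1)))) *
      (∑ s : Fin m ↪ Fin n, (M (D' ∘ ⇑s)).toOuterMeasure S)
      + (N : ENNReal) * ENNReal.ofReal (((m : ℝ) / n) * δ) ≠ ⊤ :=
    ENNReal.add_ne_top.2 ⟨hmulfin, hcfin⟩
  rw [← ENNReal.toReal_le_toReal hFfin hRfin]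
  rw [ENNReal.toReal_add hmulfin hcfin, ENNReal.toReal_mul, ENNReal.toReal_mul,
    ENNReal.toReal_ofReal (Real.exp_pos _).le,
    ENNReal.toReal_ofReal (mul_nonneg (div_nonneg (Nat.cast_nonneg _) (Nat.cast_nonneg _)) hδ),
    ENNReal.toReal_natCast, Real.exp_log hxpos,
    ENNReal.toReal_sum (fun s _ => hfin _), ENNReal.toReal_sum (fun s _ => hfin _)]
  exact R
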